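/- Let P ⊆ ℝ³ be the convex hull of the four points (0,0,0), (1,0,0), (0,1,0), (1,1,2). Then (1,1,1) ∈ 2P, and the set of points x ∈ ℤ³ such that x ∈ 2P and (1,1,1) − x ∈ P is exactly the singleton {(1,1,1)}. -/

import Mathlib

open Pointwise

/-- The polytope of Example 4.12: the convex hull of
`(0,0,0), (1,0,0), (0,1,0), (1,1,2)` in `ℝ³`. -/
noncomputable def Pex : Set (Fin 3 → ℝ) :=
  convexHull ℝ {![0,0,0], ![1,0,0], ![0,1,0], ![1,1,2]}

lemma Pex_ineqs {p : Fin 3 → ℝ} (hp : p ∈ Pex) :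
    0 ≤ p 2 ∧ p 2 ≤ 2 * p 0 ∧ p 2 ≤ 2 * p 1 ∧ 2 * p 0 + 2 * p 1 - p 2 ≤ 2 := by
  have hsub : Pex ⊆ {q : Fin 3 → ℝ |
      0 ≤ q 2 ∧ q 2 ≤ 2 * q 0 ∧ q 2 ≤ 2 * q 1 ∧ 2 * q 0 + 2 * q 1 - q 2 ≤ 2} := by
    apply convexHull_min
    · intro q hq
      simp only [Set.mem_insert_iff, Set.mem_singleton_iff] at hq
      rcases hq with rfl | rfl | rfl | rfl <;> norm_num <;> simp [Matrix.cons_val_two, Matrix.vecHead, Matrix.vecTail] <;> norm_num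
    · intro x hx y hy a b ha hb hab
      obtain ⟨hx1, hx2, hx3, hx4⟩ := hx
      obtain ⟨hy1, hy2, hy3, hy4⟩ := hy
      simp only [Set.mem_setOf_eq, Pi.add_apply, Pi.smul_apply, smul_eq_mul]
      refine ⟨by nlinarith, by nlinarith, by nlinarith, by nlinarith⟩
  exact hsub hp

lemma half_mem_Pex : (![1/2, 1/2, 1/2] : Fin 3 → ℝ) ∈ Pex := by
  have hconv : Convex ℝ Pex := convex_convexHull ℝ _
  have h0 : (![0,0,0] : Fin 3 → ℝ) ∈ Pex := subset_convexHull ℝ _ (by simp)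
  have h1 : (![1,0,0] : Fin 3 → ℝ) ∈ Pex := subset_convexHull ℝ _ (by simp)
  have h2 : (![0,1,0] : Fin 3 → ℝ) ∈ Pex := subset_convexHull ℝ _ (by simp)
  have h3 : (![1,1,2] : Fin 3 → ℝ) ∈ Pex := subset_convexHull ℝ _ (by simp)
  have hm1 : (1/2 : ℝ) • (![0,0,0] : Fin 3 → ℝ) + (1/2 : ℝ) • ![1,1,2] ∈ Pex :=
    hconv h0 h3 (by norm_num) (by norm_num) (by norm_num)
  have hm2 : (1/2 : ℝ) • (![1,0,0] : Fin 3 → ℝ) + (1/2 : ℝ) • ![0,1,0] ∈ Pex :=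
    hconv h1 h2 (by norm_num) (by norm_num) (by norm_num)
  have hm := hconv hm1 hm2 (by norm_num : (0:ℝ) ≤ 1/2)
    (by norm_num : (0:ℝ) ≤ 1/2) (by norm_num)
  convert hm using 1
  funext i
  fin_cases i <;> simp <;> norm_num

lemma one_mem_two_Pex : (![1,1,1] : Fin 3 → ℝ) ∈ (2 : ℝ) • Pex := by
  refine ⟨![1/2, 1/2, 1/2], half_mem_Pex, ?_⟩
  funext i
  fin_cases i <;> simp

/-- Example 4.12: `(1,1,1) ∈ 2P` and `2P ∩ ((1,1,1) − P) ∩ ℤ³ = {(1,1,1)}`. -/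
theorem example11_computation :
    (![1,1,1] : Fin 3 → ℝ) ∈ (2 : ℝ) • Pex ∧
    {x : Fin 3 → ℤ | (fun i => (x i : ℝ)) ∈ (2 : ℝ) • Pex ∧
        (![1,1,1] : Fin 3 → ℝ) - (fun i => (x i : ℝ)) ∈ Pex} =
      {![1,1,1]} := by
  refine ⟨one_mem_two_Pex, ?_⟩
  ext x
  simp only [Set.mem_setOf_eq, Set.mem_singleton_iff]
  constructor
  · rintro ⟨⟨p, hp, hpx⟩, hq⟩
    have hP := Pex_ineqs hp
    have hQ := Pex_ineqs hq
    have e0 : (2:ℝ) * p 0 = (x 0 : ℝ) := congrFun hpx 0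
    have e1 : (2:ℝ) * p 1 = (x 1 : ℝ) := congrFun hpx 1
    have e2 : (2:ℝ) * p 2 = (x 2 : ℝ) := congrFun hpx 2
    simp only [Pi.sub_apply] at hQ
    have q0 : (![1,1,1] : Fin 3 → ℝ) 0 = 1 := rfl
    have q1 : (![1,1,1] : Fin 3 → ℝ) 1 = 1 := rfl
    have q2 : (![1,1,1] : Fin 3 → ℝ) 2 = 1 := rfl
    rw [q0, q1, q2] at hQ
    obtain ⟨hP1, hP2, hP3, hP4⟩ := hP
    obtain ⟨hQ1, hQ2, hQ3, hQ4⟩ := hQ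
    -- translate to integer inequalities
    have i1 : (0:ℝ) ≤ (x 2 : ℝ) := by nlinarith
    have i2 : (x 2 : ℝ) ≤ 2 * (x 0 : ℝ) := by nlinarith
    have i3 : (x 2 : ℝ) ≤ 2 * (x 1 : ℝ) := by nlinarith
    have i4 : 2 * (x 0 : ℝ) + 2 * (x 1 : ℝ) - (x 2 : ℝ) ≤ 4 := by nlinarith
    have i5 : (x 2 : ℝ) ≤ 1 := by nlinarith
    have i6 : 1 - (x 2 : ℝ) ≤ 2 - 2 * (x 0 : ℝ) := by nlinarith
    have i7 : 1 - (x 2 : ℝ) ≤ 2 - 2 * (x 1 : ℝ) := by nlinarith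
    have i8 : (1:ℝ) ≤ 2 * (x 0 : ℝ) + 2 * (x 1 : ℝ) - (x 2 : ℝ) := by nlinarith
    have j1 : (0:ℤ) ≤ x 2 := by exact_mod_cast i1
    have j2 : x 2 ≤ 2 * x 0 := by exact_mod_cast i2
    have j3 : x 2 ≤ 2 * x 1 := by exact_mod_cast i3
    have j5 : x 2 ≤ 1 := by exact_mod_cast i5
    have j6 : 1 - x 2 ≤ 2 - 2 * x 0 := by exact_mod_cast i6
    have j7 : 1 - x 2 ≤ 2 - 2 * x 1 := by exact_mod_cast i7
    have j8 : (1:ℤ) ≤ 2 * x 0 + 2 * x 1 - x 2 := by exact_mod_cast i8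
    have hx0 : x 0 = 1 := by omega
    have hx1 : x 1 = 1 := by omega
    have hx2 : x 2 = 1 := by omega
    funext i
    fin_cases i <;> simp [hx0, hx1, hx2]
  · rintro rfl
    have hcast : (fun i => (((![1,1,1] : Fin 3 → ℤ)) i : ℝ)) = (![1,1,1] : Fin 3 → ℝ) := by
      funext i; fin_cases i <;> simp
    refine ⟨?_, ?_⟩
    · rw [hcast]; exact one_mem_two_Pex
    · have h0 : (![0,0,0] : Fin 3 → ℝ) ∈ Pex := subset_convexHull ℝ _ (by simp)
      rw [hcast]
      convert h0 using 1
      funext i; fin_cases i <;> simp
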